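/- For every integer K ≥ 3, the one-relator presentation P_K = ⟨a, b, t | w_K⟩, where w_K = t a^K t⁻¹ b^{K+4}, satisfies the C(6) small-cancellation condition: no element of the symmetrised closure of {w_K} is a concatenation (without cancellation) of fewer than 6 pieces. -/

import Mathlib

open FreeGroup

namespace CL

/-- A word over the alphabet `Fin n` with formal inverses. -/
abbrev Word (n : ℕ) := List (Fin n × Bool)

/-- The formal inverse of a word. -/
def wordInv {n : ℕ} (w : Word n) : Word n := (w.map fun x => (x.1, !x.2)).reverse

/-- A word is reduced if it has no adjacent cancelling pair. -/
def Reduced {n : ℕ} (w : Word n) : Prop :=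
  List.Chain' (fun a b => ¬(a.1 = b.1 ∧ a.2 = !b.2)) w

/-- A word is cyclically reduced if all of its cyclic permutations are reduced. -/
def CyclicallyReduced {n : ℕ} (w : Word n) : Prop := ∀ m : ℕ, Reduced (w.rotate m)

/-- `rel` is a (symmetrised-closure-ready) presentation: the relators are nontrivial,
cyclically reduced, and no relator is a cyclic permutation of another or of the
inverse of another. -/
def IsPres {n k : ℕ} (rel : Fin k → Word n) : Prop :=
  (∀ i, rel i ≠ []) ∧ (∀ i, CyclicallyReduced (rel i)) ∧
  (∀ i j : Fin k, i ≠ j → ∀ m : ℕ,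
     rel i ≠ (rel j).rotate m ∧ rel i ≠ (wordInv (rel j)).rotate m)

/-- The symmetrised closure: all cyclic permutations of the relators and of their
inverses. -/
def symClosure {n k : ℕ} (rel : Fin k → Word n) : Set (Word n) :=
  {w | ∃ (i : Fin k) (m : ℕ),
    w = (rel i).rotate m ∨ w = (wordInv (rel i)).rotate m}

/-- A piece: a nonempty reduced word which is an initial segment of two distinct
elements of the symmetrised closure. -/
def IsPiece {n k : ℕ} (rel : Fin k → Word n) (p : Word n) : Prop :=
  p ≠ [] ∧ Reduced p ∧ ∃ x ∈ symClosure rel, ∃ y ∈ symClosure rel,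
    x ≠ y ∧ p <+: x ∧ p <+: y

/-- The `C(N)` small-cancellation condition: no element of the symmetrised closure
is the concatenation (without cancellation) of fewer than `N` pieces. -/
def SatC {n k : ℕ} (rel : Fin k → Word n) (N : ℕ) : Prop :=
  ∀ r ∈ symClosure rel, ∀ L : List (Word n),
    (∀ p ∈ L, IsPiece rel p) → r = L.flatten → N ≤ L.length

/-- The `T(q)` small-cancellation condition. -/
def SatT {n k : ℕ} (rel : Fin k → Word n) (q : ℕ) : Prop :=
  ∀ h : ℕ, 3 ≤ h → h < q →
    ¬∃ x : ℕ → Word n,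
      (∀ i < h, x i ∈ symClosure rel) ∧
      (∀ i < h, FreeGroup.mk (x i) * FreeGroup.mk (x ((i + 1) % h)) ≠ 1) ∧
      (∀ i < h, ¬ Reduced (x i ++ x ((i + 1) % h)))

/-- The metric `C'(lam)` small-cancellation condition. -/
def SatC' {n k : ℕ} (rel : Fin k → Word n) (lam : ℚ) : Prop :=
  ∀ r ∈ symClosure rel, ∀ p : Word n, IsPiece rel p → p <+: r →
    (p.length : ℚ) < lam * r.length

/-- The normal closure of the relators in the free group. -/
def relNC {n k : ℕ} (rel : Fin k → Word n) : Subgroup (FreeGroup (Fin n)) :=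
  Subgroup.normalClosure (Set.range fun i => FreeGroup.mk (rel i))

instance {n k : ℕ} (rel : Fin k → Word n) : (relNC rel).Normal :=
  Subgroup.normalClosure_normal

/-- `T` is a full left transversal for the subgroup `H`: every left coset of `H`
contains exactly one element of `T`. -/
def IsLeftTransversal {F : Type*} [Group F] (T : Set F) (H : Subgroup F) : Prop :=
  ∀ g : F, ∃! t : F, t ∈ T ∧ g⁻¹ * t ∈ H

/-- The conjugate `t⟨r_i⟩t⁻¹` of the cyclic subgroup generated by the `i`-th relator. -/
def conjCyc {n k : ℕ} (rel : Fin k → Word n) (i : Fin k) (t : FreeGroup (Fin n)) :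
    Subgroup (FreeGroup (Fin n)) :=
  Subgroup.zpowers (t * FreeGroup.mk (rel i) * t⁻¹)


/-- The word `w_K = t a^K t⁻¹ b^(K+4)` over the alphabet `{a, b, t} = {0, 1, 2}`. -/
def wK (K : ℕ) : Word 3 :=
  [((2 : Fin 3), true)] ++ List.replicate K ((0 : Fin 3), true) ++
    [((2 : Fin 3), false)] ++ List.replicate (K + 4) ((1 : Fin 3), true)

/-- generic relator shape: `t a^K t⁻¹ b^(K+4)` with letter booleans `e`. -/
def Wgen (K : ℕ) (e : Bool) : Word 3 :=
  [((2 : Fin 3), true)] ++ List.replicate K ((0 : Fin 3), e) ++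
    [((2 : Fin 3), false)] ++ List.replicate (K + 4) ((1 : Fin 3), e)

def cgen (K : ℕ) (e : Bool) (i : ℕ) : Fin 3 × Bool :=
  if i = 0 then ((2 : Fin 3), true)
  else if i ≤ K then ((0 : Fin 3), e)
  else if i = K + 1 then ((2 : Fin 3), false)
  else ((1 : Fin 3), e)

lemma Wgen_length (K : ℕ) (e : Bool) : (Wgen K e).length = 2 * K + 6 := by
  simp [Wgen]; omega

lemma Wgen_getElem (K : ℕ) (e : Bool) (i : ℕ) (h : i < (Wgen K e).length) :
    (Wgen K e)[i] = cgen K e i := by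
  have h' : i < 2 * K + 6 := by rwa [Wgen_length] at h
  unfold cgen
  simp only [Wgen, List.getElem_append, List.length_append, List.length_replicate,
    List.length_cons, List.length_nil, List.getElem_replicate]
  split_ifs <;> first | rfl | omega |
    (simp_all [List.getElem_cons, List.getElem_singleton] <;>
      (intro h; exact absurd (by omega) h))


lemma cgen_zero (K : ℕ) (e : Bool) : cgen K e 0 = ((2 : Fin 3), true) := by
  unfold cgen; rw [if_pos rfl]

lemma cgen_K1 (K : ℕ) (e : Bool) : cgen K e (K + 1) = ((2 : Fin 3), false) := by
  unfold cgen; rw [if_neg (by omega), if_neg (by omega), if_pos rfl]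

lemma cgen_eq_tp {K : ℕ} {e : Bool} {u : ℕ} :
    cgen K e u = ((2 : Fin 3), true) ↔ u = 0 := by
  unfold cgen; split_ifs <;> simp_all <;> omega

lemma cgen_eq_tm {K : ℕ} {e : Bool} {u : ℕ} :
    cgen K e u = ((2 : Fin 3), false) ↔ u = K + 1 := by
  unfold cgen; split_ifs <;> simp_all <;> omega

lemma cgen_eq_a {K : ℕ} {e : Bool} {u : ℕ} :
    cgen K e u = ((0 : Fin 3), e) ↔ (1 ≤ u ∧ u ≤ K) := by
  unfold cgen; split_ifs <;> simp_all <;> omega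

lemma cgen_eq_b {K : ℕ} {e : Bool} {u : ℕ} :
    cgen K e u = ((1 : Fin 3), e) ↔ K + 1 < u := by
  unfold cgen; split_ifs <;> simp_all <;> omega

lemma cgen_ne_a' {K : ℕ} {e e' : Bool} (h : e ≠ e') {u : ℕ} :
    cgen K e' u ≠ ((0 : Fin 3), e) := by
  unfold cgen; split_ifs <;> simp_all <;> exact fun h' => h h'.symm

lemma cgen_ne_b' {K : ℕ} {e e' : Bool} (h : e ≠ e') {u : ℕ} :
    cgen K e' u ≠ ((1 : Fin 3), e) := by
  unfold cgen; split_ifs <;> simp_all <;> exact fun h' => h h'.symm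

lemma prefix_rotate_get {K : ℕ} {e : Bool} {m : ℕ} {p : Word 3}
    (h : p <+: (Wgen K e).rotate m) {j : ℕ} (hj : j < p.length) :
    p[j] = cgen K e ((j + m) % (2 * K + 6)) := by
  have hlen : ((Wgen K e).rotate m).length = 2 * K + 6 := by
    rw [List.length_rotate, Wgen_length]
  have hj2 : j < ((Wgen K e).rotate m).length := lt_of_lt_of_le hj h.length_le
  rw [h.getElem hj, List.getElem_rotate]
  rw [Wgen_getElem, Wgen_length]

lemma mod_char (x N : ℕ) (hN : 0 < N) (h : x < 2 * N) :
    (x % N = x ∨ x % N + N = x) ∧ x % N < N := by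
  refine ⟨?_, Nat.mod_lt _ hN⟩
  rcases Nat.lt_or_ge x N with h' | h'
  · left; exact Nat.mod_eq_of_lt h'
  · right; rw [Nat.mod_eq_sub_mod h', Nat.mod_eq_of_lt (by omega)]; omega

lemma lemR {K : ℕ} (hK : 3 ≤ K) {e : Bool} {m m' : ℕ} {p : Word 3}
    (hm : m < 2 * K + 6) (hm' : m' < 2 * K + 6) (hne : m ≠ m')
    (h1 : p <+: (Wgen K e).rotate m) (h2 : p <+: (Wgen K e).rotate m')
    (hp : p ≠ []) :
    (1 ≤ p.length ∧ p.length ≤ K - 1 ∧ p = List.replicate p.length ((0 : Fin 3), e)) ∨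
    (1 ≤ p.length ∧ p.length ≤ K + 3 ∧ p = List.replicate p.length ((1 : Fin 3), e)) := by
  have hL : 0 < p.length := List.length_pos_iff.mpr hp
  have hLN : p.length ≤ 2 * K + 6 := by
    have := h1.length_le; rwa [List.length_rotate, Wgen_length] at this
  have hN0 : 0 < 2 * K + 6 := by omega
  have H : ∀ j, (hj : j < p.length) →
      cgen K e ((j + m) % (2 * K + 6)) = cgen K e ((j + m') % (2 * K + 6)) :=
    fun j hj => (prefix_rotate_get h1 hj).symm.trans (prefix_rotate_get h2 hj)
  have key : ∀ j, j < p.length →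
      ((j + m) % (2 * K + 6) ≠ 0 ∧ (j + m) % (2 * K + 6) ≠ K + 1 ∧
       (j + m') % (2 * K + 6) ≠ 0 ∧ (j + m') % (2 * K + 6) ≠ K + 1) := by
    intro j hj
    have heq := H j hj
    obtain ⟨c1, c1'⟩ := mod_char (j + m) (2 * K + 6) hN0 (by omega)
    obtain ⟨c2, c2'⟩ := mod_char (j + m') (2 * K + 6) hN0 (by omega)
    refine ⟨?_, ?_, ?_, ?_⟩ <;> intro h0
    · rw [h0, cgen_zero] at heq
      have := cgen_eq_tp.mp heq.symm
      omega
    · rw [h0, cgen_K1] at heq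
      have := cgen_eq_tm.mp heq.symm
      omega
    · rw [h0, cgen_zero] at heq
      have := cgen_eq_tp.mp heq
      omega
    · rw [h0, cgen_K1] at heq
      have := cgen_eq_tm.mp heq
      omega
  -- both rotations start past position 0 and do not wrap
  have hm1 : 1 ≤ m := by
    have h := (key 0 hL).1
    rw [Nat.zero_add, Nat.mod_eq_of_lt hm] at h
    omega
  have hm'1 : 1 ≤ m' := by
    have h := (key 0 hL).2.2.1
    rw [Nat.zero_add, Nat.mod_eq_of_lt hm'] at h
    omega
  have hmL : m + p.length ≤ 2 * K + 6 := by
    by_contra hc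
    have hj : 2 * K + 6 - m < p.length := by omega
    have h := (key _ hj).1
    rw [Nat.sub_add_cancel (le_of_lt hm), Nat.mod_self] at h
    exact h rfl
  have hm'L : m' + p.length ≤ 2 * K + 6 := by
    by_contra hc
    have hj : 2 * K + 6 - m' < p.length := by omega
    have h := (key _ hj).2.2.1
    rw [Nat.sub_add_cancel (le_of_lt hm'), Nat.mod_self] at h
    exact h rfl
  have hzone : m + p.length ≤ K + 1 ∨ K + 2 ≤ m := by
    by_contra hc
    push_neg at hc
    have hj : K + 1 - m < p.length := by omega
    have h := (key _ hj).2.1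
    rw [Nat.mod_eq_of_lt (by omega)] at h
    omega
  rcases hzone with hA | hB
  · left
    have hpj : ∀ j, (hj : j < p.length) → p[j] = ((0 : Fin 3), e) := by
      intro j hj
      have h := prefix_rotate_get h1 hj
      rw [Nat.mod_eq_of_lt (by omega)] at h
      rw [h]
      exact cgen_eq_a.mpr (by omega)
    have hm'A : m' + p.length ≤ K + 1 := by
      have hj : p.length - 1 < p.length := by omega
      have e2 := prefix_rotate_get h2 hj
      rw [Nat.mod_eq_of_lt (by omega), hpj _ hj] at e2
      have := cgen_eq_a.mp e2.symm
      omega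
    refine ⟨hL, by omega, ?_⟩
    rw [List.eq_replicate_iff]
    refine ⟨rfl, fun b hb => ?_⟩
    obtain ⟨j, hj, rfl⟩ := List.mem_iff_getElem.mp hb
    exact hpj j hj
  · right
    have hpj : ∀ j, (hj : j < p.length) → p[j] = ((1 : Fin 3), e) := by
      intro j hj
      have h := prefix_rotate_get h1 hj
      rw [Nat.mod_eq_of_lt (by omega)] at h
      rw [h]
      exact cgen_eq_b.mpr (by omega)
    have hm'B : K + 2 ≤ m' := by
      have e2 := prefix_rotate_get h2 hL
      rw [Nat.zero_add, Nat.mod_eq_of_lt hm', hpj _ hL] at e2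
      have := cgen_eq_b.mp e2.symm
      omega
    refine ⟨hL, by omega, ?_⟩
    rw [List.eq_replicate_iff]
    refine ⟨rfl, fun b hb => ?_⟩
    obtain ⟨j, hj, rfl⟩ := List.mem_iff_getElem.mp hb
    exact hpj j hj

lemma lemX {K : ℕ} (hK : 3 ≤ K) {e e' : Bool} (hee : e ≠ e') {m m' : ℕ} {p : Word 3}
    (hm : m < 2 * K + 6) (hm' : m' < 2 * K + 6)
    (h1 : p <+: (Wgen K e).rotate m) (h2 : p <+: (Wgen K e').rotate m')
    (hp : p ≠ []) :
    p = [((2 : Fin 3), true)] ∨ p = [((2 : Fin 3), false)] := by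
  have hL : 0 < p.length := List.length_pos_iff.mpr hp
  have H : ∀ j, (hj : j < p.length) →
      cgen K e ((j + m) % (2 * K + 6)) = cgen K e' ((j + m') % (2 * K + 6)) :=
    fun j hj => (prefix_rotate_get h1 hj).symm.trans (prefix_rotate_get h2 hj)
  -- position 0 must be a t-letter
  have h0 := H 0 hL
  simp only [Nat.zero_add] at h0
  rw [Nat.mod_eq_of_lt hm, Nat.mod_eq_of_lt hm'] at h0
  have hmcase : m = 0 ∨ m = K + 1 := by
    by_contra hc
    push_neg at hc
    rcases Nat.lt_or_ge m (K + 1) with h' | h'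
    · exact cgen_ne_a' hee (h0 ▸ cgen_eq_a.mpr (by omega))
    · exact cgen_ne_b' hee (h0 ▸ cgen_eq_b.mpr (by omega))
  -- p has length 1
  have hL1 : p.length = 1 := by
    by_contra hc
    have h1' := H 1 (by omega)
    rcases hmcase with rfl | rfl
    · rw [Nat.mod_eq_of_lt (by omega)] at h1'
      have : cgen K e 1 = ((0 : Fin 3), e) := cgen_eq_a.mpr (by omega)
      exact cgen_ne_a' hee (this ▸ h1').symm
    · rw [Nat.mod_eq_of_lt (by omega)] at h1'
      have : cgen K e (1 + (K + 1)) = ((1 : Fin 3), e) := cgen_eq_b.mpr (by omega)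
      exact cgen_ne_b' hee (this ▸ h1').symm
  obtain ⟨a, rfl⟩ := List.length_eq_one_iff.mp hL1
  have hget := prefix_rotate_get h1 (j := 0) (by simp)
  rw [Nat.zero_add, Nat.mod_eq_of_lt hm] at hget
  simp only [List.getElem_singleton] at hget
  rcases hmcase with rfl | rfl
  · left; rw [hget, cgen_zero]
  · right; rw [hget, cgen_K1]

lemma wK_eq_Wgen (K : ℕ) : wK K = Wgen K true := rfl

lemma wordInv_wK (K : ℕ) : wordInv (wK K) = (Wgen K false).rotate (K + 2) := by
  have hA : Wgen K false =
      ([((2 : Fin 3), true)] ++ List.replicate K ((0 : Fin 3), false) ++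
        [((2 : Fin 3), false)]) ++ List.replicate (K + 4) ((1 : Fin 3), false) := by
    simp [Wgen]
  have hlen : ([((2 : Fin 3), true)] ++ List.replicate K ((0 : Fin 3), false) ++
        [((2 : Fin 3), false)]).length = K + 2 := by
    simp only [List.length_append, List.length_replicate, List.length_cons,
      List.length_nil]
    omega
  rw [hA, ← hlen, List.rotate_append_length_eq]
  simp [wordInv, wK]

/-- number of letters of `p` with generator index `i`. -/
def cnt (i : Fin 3) (p : Word 3) : ℕ := p.countP (fun x => decide (x.1 = i))

lemma cnt_rotate (i : Fin 3) (l : Word 3) (n : ℕ) : cnt i (l.rotate n) = cnt i l :=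
  (l.rotate_perm n).countP_eq _

lemma cnt_wordInv (i : Fin 3) (w : Word 3) : cnt i (wordInv w) = cnt i w := by
  unfold wordInv cnt
  rw [List.countP_reverse, List.countP_map]
  rfl

lemma cnt_wK0 (K : ℕ) : cnt 0 (wK K) = K := by
  simp [cnt, wK, List.countP_append, List.countP_replicate, List.countP_cons]

lemma cnt_wK1 (K : ℕ) : cnt 1 (wK K) = K + 4 := by
  simp [cnt, wK, List.countP_append, List.countP_replicate, List.countP_cons]

lemma cnt_wK2 (K : ℕ) : cnt 2 (wK K) = 2 := by
  simp [cnt, wK, List.countP_append, List.countP_replicate, List.countP_cons]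

lemma closure_norm {K : ℕ} {x : Word 3}
    (hx : x ∈ symClosure (fun _ : Fin 1 => wK K)) :
    ∃ (e : Bool) (m : ℕ), m < 2 * K + 6 ∧ x = (Wgen K e).rotate m := by
  have hN0 : 0 < 2 * K + 6 := by omega
  obtain ⟨i, m, h | h⟩ := hx
  · refine ⟨true, m % (2 * K + 6), Nat.mod_lt _ hN0, ?_⟩
    rw [h]
    show (wK K).rotate m = _
    rw [wK_eq_Wgen, ← Wgen_length K true, List.rotate_mod]
  · refine ⟨false, (K + 2 + m) % (2 * K + 6), Nat.mod_lt _ hN0, ?_⟩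
    rw [h]
    show (wordInv (wK K)).rotate m = _
    rw [wordInv_wK, List.rotate_rotate, ← Wgen_length K false, List.rotate_mod]

lemma piece_classify {K : ℕ} (hK : 3 ≤ K) {p : Word 3}
    (hp : IsPiece (fun _ : Fin 1 => wK K) p) :
    (cnt 0 p = 0 ∧ cnt 1 p = 0 ∧ cnt 2 p = 1) ∨
    (1 ≤ cnt 0 p ∧ cnt 0 p ≤ K - 1 ∧ cnt 1 p = 0 ∧ cnt 2 p = 0) ∨
    (1 ≤ cnt 1 p ∧ cnt 1 p ≤ K + 3 ∧ cnt 0 p = 0 ∧ cnt 2 p = 0) := by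
  obtain ⟨hne, -, x, hx, y, hy, hxy, hpx, hpy⟩ := hp
  obtain ⟨e, m, hm, rfl⟩ := closure_norm hx
  obtain ⟨e', m', hm', rfl⟩ := closure_norm hy
  by_cases hee : e = e'
  · subst hee
    have hmm : m ≠ m' := by rintro rfl; exact hxy rfl
    rcases lemR hK hm hm' hmm hpx hpy hne with ⟨h1, h2, h3⟩ | ⟨h1, h2, h3⟩
    · right; left
      rw [h3]
      simp [cnt, List.countP_replicate]
      omega
    · right; right
      rw [h3]
      simp [cnt, List.countP_replicate]
      omega
  · rcases lemX hK hee hm hm' hpx hpy hne with rfl | rfl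
    · left; refine ⟨?_, ?_, ?_⟩ <;> simp [cnt]
    · left; refine ⟨?_, ?_, ?_⟩ <;> simp [cnt]

lemma sum_le_countP_mul (s : List ℕ) (B : ℕ) (hB : ∀ x ∈ s, x ≤ B) :
    s.sum ≤ s.countP (fun x => decide (0 < x)) * B := by
  induction s with
  | nil => simp
  | cons a t ih =>
    have ha := hB a (by simp)
    have ht := ih (fun x hx => hB x (by simp [hx]))
    by_cases h : 0 < a
    · have hd : decide (0 < a) = true := by simpa using h
      rw [List.sum_cons, List.countP_cons, hd, if_pos rfl, add_mul, one_mul]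
      linarith
    · have h0 : a = 0 := by omega
      subst h0
      rw [List.sum_cons, List.countP_cons]
      simpa using ht

lemma countP_three_le {α : Type*} (L : List α) (P0 P1 P2 : α → Bool)
    (h : ∀ p ∈ L, ¬(P0 p = true ∧ P1 p = true) ∧ ¬(P0 p = true ∧ P2 p = true) ∧
      ¬(P1 p = true ∧ P2 p = true)) :
    L.countP P0 + L.countP P1 + L.countP P2 ≤ L.length := by
  induction L with
  | nil => simp
  | cons a t ih =>
    simp only [List.countP_cons, List.length_cons]
    have ha := h a (by simp)
    have ht := ih (fun p hp => h p (by simp [hp]))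
    by_cases h0 : P0 a <;> by_cases h1 : P1 a <;> by_cases h2 : P2 a <;>
      simp_all <;> omega

lemma cnt_Wgen0 (K : ℕ) (e : Bool) : cnt 0 (Wgen K e) = K := by
  simp [cnt, Wgen, List.countP_append, List.countP_replicate, List.countP_cons]

lemma cnt_Wgen1 (K : ℕ) (e : Bool) : cnt 1 (Wgen K e) = K + 4 := by
  simp [cnt, Wgen, List.countP_append, List.countP_replicate, List.countP_cons]

lemma cnt_Wgen2 (K : ℕ) (e : Bool) : cnt 2 (Wgen K e) = 2 := by
  simp [cnt, Wgen, List.countP_append, List.countP_replicate, List.countP_cons]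

lemma two_le_aux {s : List ℕ} {B S : ℕ} (hB : ∀ x ∈ s, x ≤ B) (hS : s.sum = S)
    (hBS : B < S) : 2 ≤ s.countP (fun x => decide (0 < x)) := by
  have h := sum_le_countP_mul s B hB
  by_contra hc
  push_neg at hc
  have h2 : s.countP (fun x => decide (0 < x)) * B ≤ 1 * B :=
    Nat.mul_le_mul_right B (by omega)
  rw [one_mul] at h2
  linarith

theorem wK_satisfies_C6 (K : ℕ) (hK : 3 ≤ K) :
    SatC (fun _ : Fin 1 => wK K) 6 := by
  intro r hr L hL hrL
  have hclass := fun p hp => piece_classify hK (hL p hp)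
  -- total counts of r
  obtain ⟨e, m, hm, rfl⟩ := closure_norm hr
  have h0 : ((L.map (cnt 0)).sum : ℕ) = K := by
    have hflat : cnt 0 (L.flatten) = (L.map (cnt 0)).sum := by
      unfold cnt
      rw [List.countP_flatten]
    rw [← hflat, ← hrL, cnt_rotate, cnt_Wgen0]
  have h1 : ((L.map (cnt 1)).sum : ℕ) = K + 4 := by
    have hflat : cnt 1 (L.flatten) = (L.map (cnt 1)).sum := by
      unfold cnt
      rw [List.countP_flatten]
    rw [← hflat, ← hrL, cnt_rotate, cnt_Wgen1]
  have h2 : ((L.map (cnt 2)).sum : ℕ) = 2 := by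
    have hflat : cnt 2 (L.flatten) = (L.map (cnt 2)).sum := by
      unfold cnt
      rw [List.countP_flatten]
    rw [← hflat, ← hrL, cnt_rotate, cnt_Wgen2]
  -- at least two pieces of each kind
  have c0 : 2 ≤ L.countP (fun p => decide (0 < cnt 0 p)) := by
    have h := two_le_aux (s := L.map (cnt 0)) (B := K - 1) (S := K)
      (fun x hx => by
        obtain ⟨p, hp, rfl⟩ := List.mem_map.mp hx
        rcases hclass p hp with ⟨ha, -, -⟩ | ⟨-, ha, -, -⟩ | ⟨-, -, ha, -⟩ <;> omega)
      h0 (by omega)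
    rwa [List.countP_map] at h
  have c1 : 2 ≤ L.countP (fun p => decide (0 < cnt 1 p)) := by
    have h := two_le_aux (s := L.map (cnt 1)) (B := K + 3) (S := K + 4)
      (fun x hx => by
        obtain ⟨p, hp, rfl⟩ := List.mem_map.mp hx
        rcases hclass p hp with ⟨-, ha, -⟩ | ⟨-, -, ha, -⟩ | ⟨-, ha, -, -⟩ <;> omega)
      h1 (by omega)
    rwa [List.countP_map] at h
  have c2 : 2 ≤ L.countP (fun p => decide (0 < cnt 2 p)) := by
    have h := two_le_aux (s := L.map (cnt 2)) (B := 1) (S := 2)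
      (fun x hx => by
        obtain ⟨p, hp, rfl⟩ := List.mem_map.mp hx
        rcases hclass p hp with ⟨-, -, ha⟩ | ⟨-, -, -, ha⟩ | ⟨-, -, -, ha⟩ <;> omega)
      h2 (by omega)
    rwa [List.countP_map] at h
  have hdisj := countP_three_le L (fun p => decide (0 < cnt 0 p))
    (fun p => decide (0 < cnt 1 p)) (fun p => decide (0 < cnt 2 p))
    (fun p hp => by
      rcases hclass p hp with ⟨ha, hb, hc⟩ | ⟨ha, -, hb, hc⟩ | ⟨ha, -, hb, hc⟩ <;>
        refine ⟨?_, ?_, ?_⟩ <;> simp <;> omega)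
  omega


end CL
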